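/- Let R′(1) denote the entrywise derivative of the D(D₃) R-matrix R(z) at z = 1, and let P be the 9×9 flip permutation matrix. Then i·P·R′(1) = Σ_{γ∈S₃} i·(E^{γ(1)}_{γ(2)} ⊗ E^{γ(2)}_{γ(3)} − E^{γ(2)}_{γ(3)} ⊗ E^{γ(1)}_{γ(2)}), where the sum runs over all six permutations γ of {1,2,3} and E^i_j denotes the 3×3 elementary matrix with 1 in row i, column j and 0 elsewhere. -/

import Mathlib

open Matrix Kronecker

noncomputable section

abbrev Idx9 := Fin 3 × Fin 3

def flipP : Matrix Idx9 Idx9 ℂ := fun p q => if p.1 = q.2 ∧ p.2 = q.1 then 1 else 0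

def RD3 (z : ℂ) : Matrix Idx9 Idx9 ℂ := fun p q =>
  let pf := z * (z - 1) / (z ^ 2 - z + 1)
  let qf := z / (z ^ 2 - z + 1)
  let rf := (1 - z) / (z ^ 2 - z + 1)
  match p, q with
  | (0,0), (0,0) => 1
  | (1,1), (1,1) => 1
  | (2,2), (2,2) => 1
  | (0,1), (0,2) => pf
  | (0,2), (0,1) => pf
  | (1,0), (1,2) => pf
  | (1,2), (1,0) => pf
  | (2,0), (2,1) => pf
  | (2,1), (2,0) => pf
  | (0,1), (1,0) => qf
  | (0,2), (2,0) => qf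
  | (1,0), (0,1) => qf
  | (1,2), (2,1) => qf
  | (2,0), (0,2) => qf
  | (2,1), (1,2) => qf
  | (0,1), (2,1) => rf
  | (0,2), (1,2) => rf
  | (1,0), (2,0) => rf
  | (1,2), (0,2) => rf
  | (2,0), (1,0) => rf
  | (2,1), (0,1) => rf
  | _, _ => 0

def MD3 (z : ℂ) : Matrix Idx9 Idx9 ℂ := fun p q =>
  match p, q with
  | (0,0), (0,0) => z ^ 2 + 1
  | (1,1), (1,1) => z ^ 2 + 1
  | (2,2), (2,2) => z ^ 2 + 1
  | (0,0), (1,1) => z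
  | (0,0), (2,2) => z
  | (1,1), (0,0) => z
  | (1,1), (2,2) => z
  | (2,2), (0,0) => z
  | (2,2), (1,1) => z
  | (0,1), (0,2) => 1
  | (0,2), (0,1) => 1
  | (1,0), (1,2) => 1
  | (1,2), (1,0) => 1
  | (2,0), (2,1) => 1
  | (2,1), (2,0) => 1
  | (0,1), (1,0) => -z
  | (0,2), (2,0) => -z
  | (1,0), (0,1) => -z
  | (1,2), (2,1) => -z
  | (2,0), (0,2) => -z
  | (2,1), (1,2) => -z
  | (0,1), (2,1) => z ^ 2
  | (0,2), (1,2) => z ^ 2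
  | (1,0), (2,0) => z ^ 2
  | (1,2), (0,2) => z ^ 2
  | (2,0), (1,0) => z ^ 2
  | (2,1), (0,1) => z ^ 2
  | _, _ => 0

def curlR (z : ℂ) : Matrix Idx9 Idx9 ℂ :=
  ((z ^ 2 - z + 1) / ((z - 1) * (z ^ 3 - 1))) • MD3 z

def pt1 (A : Matrix Idx9 Idx9 ℂ) : Matrix Idx9 Idx9 ℂ :=
  fun p q => A (q.1, p.2) (p.1, q.2)

/-- The reflection equation (RE−). -/
def REminus (K : ℂ → Matrix (Fin 3) (Fin 3) ℂ) : Prop :=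
  ∀ x y : ℂ, x ≠ 0 → y ≠ 0 →
    (x * y⁻¹) ^ 2 - x * y⁻¹ + 1 ≠ 0 → (x * y) ^ 2 - x * y + 1 ≠ 0 →
    RD3 (x * y⁻¹) * (K x ⊗ₖ (1 : Matrix (Fin 3) (Fin 3) ℂ)) *
        (flipP * RD3 (x * y) * flipP) * ((1 : Matrix (Fin 3) (Fin 3) ℂ) ⊗ₖ K y)
      = ((1 : Matrix (Fin 3) (Fin 3) ℂ) ⊗ₖ K y) * RD3 (x * y) *
          (K x ⊗ₖ (1 : Matrix (Fin 3) (Fin 3) ℂ)) * (flipP * RD3 (x * y⁻¹) * flipP)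

/-- The dual reflection equation (RE+). -/
def REplus (K : ℂ → Matrix (Fin 3) (Fin 3) ℂ) : Prop :=
  ∀ x y : ℂ, x ≠ 0 → y ≠ 0 →
    (y * x⁻¹) ^ 2 - y * x⁻¹ + 1 ≠ 0 → (x * y) ^ 3 ≠ 1 →
    RD3 (y * x⁻¹) * (K x ⊗ₖ (1 : Matrix (Fin 3) (Fin 3) ℂ)) *
        (flipP * curlR (x * y) * flipP) * ((1 : Matrix (Fin 3) (Fin 3) ℂ) ⊗ₖ K y)
      = ((1 : Matrix (Fin 3) (Fin 3) ℂ) ⊗ₖ K y) * curlR (x * y) *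
          (K x ⊗ₖ (1 : Matrix (Fin 3) (Fin 3) ℂ)) * (flipP * RD3 (y * x⁻¹) * flipP)

def StarCond (h : ZMod 3 → ZMod 3 → ℂ → ℂ) (z₀ : ℂ) : Prop :=
  ∀ (i j k l : ZMod 3) (y : ℂ),
    h i j z₀ * h k l y = h i (j + k + 2 * l) z₀ * h (2 * i + 2 * k) (2 * i + 2 * l) y

def NonDiag (h : ZMod 3 → ZMod 3 → ℂ → ℂ) : Prop :=
  ∃ (i j : ZMod 3) (y : ℂ), i ≠ j ∧ h i j y ≠ 0

def Kof (h : ZMod 3 → ZMod 3 → ℂ → ℂ) (z : ℂ) : Matrix (Fin 3) (Fin 3) ℂ :=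
  fun a b => h (((a : ℕ) : ZMod 3) + 1) (((b : ℕ) : ZMod 3) + 1) z

/-- The entrywise derivative of the `D(D₃)` R-matrix at `z = 1`. -/
def RD3deriv : Matrix Idx9 Idx9 ℂ :=
  fun p q => deriv (fun z : ℂ => RD3 z p q) 1

lemma deriv_pf : deriv (fun z : ℂ => z * (z - 1) / (z ^ 2 - z + 1)) 1 = 1 := by
  have hu : HasDerivAt (fun z : ℂ => z * (z - 1)) 1 1 := by
    simpa [Pi.mul_def] using (hasDerivAt_id (1:ℂ)).mul ((hasDerivAt_id (1:ℂ)).sub_const 1)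
  have hv : HasDerivAt (fun z : ℂ => z ^ 2 - z + 1) 1 1 := by
    have h0 := ((hasDerivAt_pow 2 (1:ℂ)).sub (hasDerivAt_id 1)).add_const 1
    norm_num at h0; simpa using h0
  have h := hu.div hv (by norm_num)
  simpa [Pi.div_def] using h.deriv

lemma deriv_qf : deriv (fun z : ℂ => z / (z ^ 2 - z + 1)) 1 = 0 := by
  have hv : HasDerivAt (fun z : ℂ => z ^ 2 - z + 1) 1 1 := by
    have h0 := ((hasDerivAt_pow 2 (1:ℂ)).sub (hasDerivAt_id 1)).add_const 1
    norm_num at h0; simpa using h0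
  have h := (hasDerivAt_id (1:ℂ)).div hv (by norm_num)
  simpa using h.deriv

lemma deriv_rf : deriv (fun z : ℂ => (1 - z) / (z ^ 2 - z + 1)) 1 = -1 := by
  have hu : HasDerivAt (fun z : ℂ => 1 - z) (-1) 1 := by
    simpa using (hasDerivAt_id (1:ℂ)).const_sub 1
  have hv : HasDerivAt (fun z : ℂ => z ^ 2 - z + 1) 1 1 := by
    have h0 := ((hasDerivAt_pow 2 (1:ℂ)).sub (hasDerivAt_id 1)).add_const 1
    norm_num at h0; simpa using h0
  have h := hu.div hv (by norm_num)
  simpa [Pi.div_def] using h.deriv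

def Dm : Matrix Idx9 Idx9 ℂ := fun p q =>
  match p, q with
  | (0,1), (0,2) => 1
  | (0,2), (0,1) => 1
  | (1,0), (1,2) => 1
  | (1,2), (1,0) => 1
  | (2,0), (2,1) => 1
  | (2,1), (2,0) => 1
  | (0,1), (2,1) => -1
  | (0,2), (1,2) => -1
  | (1,0), (2,0) => -1
  | (1,2), (0,2) => -1
  | (2,0), (1,0) => -1
  | (2,1), (0,1) => -1
  | _, _ => 0

lemma RD3deriv_eq : RD3deriv = Dm := by
  ext ⟨a, b⟩ ⟨c, d⟩
  show deriv (fun z : ℂ => RD3 z (a, b) (c, d)) 1 = _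
  fin_cases a <;> fin_cases b <;> fin_cases c <;> fin_cases d <;>
    first
      | exact deriv_pf
      | exact deriv_qf
      | exact deriv_rf
      | exact deriv_const 1 (0:ℂ)
      | exact deriv_const 1 (1:ℂ)

set_option maxHeartbeats 4000000 in
/-- the local Hamiltonian `i·P·R′(1)` as a sum over permutations. -/
theorem statement_19 :
    Complex.I • (flipP * RD3deriv)
      = ∑ γ : Equiv.Perm (Fin 3),
          Complex.I •
            (single (γ 0) (γ 1) (1 : ℂ) ⊗ₖ single (γ 1) (γ 2) (1 : ℂ)
              - single (γ 1) (γ 2) (1 : ℂ) ⊗ₖ single (γ 0) (γ 1) (1 : ℂ)) := by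
  have huniv : (Finset.univ : Finset (Equiv.Perm (Fin 3))) =
      {1, Equiv.swap 0 1, Equiv.swap 0 2, Equiv.swap 1 2,
       Equiv.swap 0 1 * Equiv.swap 0 2, Equiv.swap 0 2 * Equiv.swap 0 1} := by decide
  rw [RD3deriv_eq, huniv]
  rw [Finset.sum_insert (by decide), Finset.sum_insert (by decide),
    Finset.sum_insert (by decide), Finset.sum_insert (by decide),
    Finset.sum_insert (by decide), Finset.sum_singleton]
  ext ⟨a, b⟩ ⟨c, d⟩
  fin_cases a <;> fin_cases b <;> fin_cases c <;> fin_cases d <;>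
    simp [Matrix.mul_apply, Fintype.sum_prod_type, Fin.sum_univ_three, flipP, Dm,
      Matrix.single, Matrix.kroneckerMap_apply, Equiv.swap_apply_def,
      Matrix.smul_apply, Matrix.sub_apply, Matrix.add_apply, Equiv.Perm.mul_apply,
      Equiv.Perm.one_apply]
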